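/- Along every solution of the semi-discrete ORFD system, the discrete energy is dissipative: for all t ≥ 0, (d/dt) E_h(t) = −k₁ |w¹_{N+1}(t)|² − k₂ |w²_{N+1}(t)|² ≤ 0. -/

import Mathlib

noncomputable section

/-- Midpoint average `U_{j+1/2} = (U_j + U_{j+1})/2` of a grid function. -/
def gridMid (U : ℕ → ℝ) (j : ℕ) : ℝ := (U j + U (j + 1)) / 2

/-- Difference quotient `δ_x U_{j+1/2} = (U_{j+1} − U_j)/h` of a grid function. -/
def gridDx (h : ℝ) (U : ℕ → ℝ) (j : ℕ) : ℝ := (U (j + 1) - U j) / h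

/-- The discrete ORFD energy
`E_h = (h/2) Σ_{j=0}^N [ρ|w¹_{j+1/2}|² + μ|w²_{j+1/2}|² + β|γu¹_{j+1/2} − u²_{j+1/2}|² + α₁|u¹_{j+1/2}|²]`. -/
def discEnergy (ρ μ β γ α₁ h : ℝ) (N : ℕ) (u1 u2 w1 w2 : ℕ → ℝ) : ℝ :=
  h / 2 * ∑ j ∈ Finset.range (N + 1),
    (ρ * gridMid w1 j ^ 2 + μ * gridMid w2 j ^ 2
      + β * (γ * gridMid u1 j - gridMid u2 j) ^ 2 + α₁ * gridMid u1 j ^ 2)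

/-- Along every solution of the semi-discrete ORFD system, the discrete
energy is dissipative: `(d/dt)E_h(t) = −k₁|w¹_{N+1}(t)|² − k₂|w²_{N+1}(t)|² ≤ 0`. -/
theorem stmt_8 (ρ μ α β γ α₁ k₁ k₂ : ℝ)
    (hρ : 0 < ρ) (hμ : 0 < μ) (hα : 0 < α) (hβ : 0 < β) (hγ : 0 < γ)
    (hk₁ : 0 < k₁) (hk₂ : 0 < k₂)
    (hα₁def : α₁ = α - γ ^ 2 * β) (hα₁ : 0 < α₁)
    (N : ℕ) (L h : ℝ) (hL : 0 < L) (hh : h = L / (N + 1))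
    (u1 u2 w1 w2 : ℝ → ℕ → ℝ)
    (hode1 : ∀ t ≥ (0 : ℝ), ∀ j ≤ N,
      HasDerivAt (fun s => gridMid (u1 s) j) (gridDx h (w1 t) j) t)
    (hode2 : ∀ t ≥ (0 : ℝ), ∀ j ≤ N,
      HasDerivAt (fun s => gridMid (u2 s) j) (gridDx h (w2 t) j) t)
    (hode3 : ∀ t ≥ (0 : ℝ), ∀ j ≤ N,
      HasDerivAt (fun s => gridMid (w1 s) j)
        ((α * gridDx h (u1 t) j - γ * β * gridDx h (u2 t) j) / ρ) t)
    (hode4 : ∀ t ≥ (0 : ℝ), ∀ j ≤ N,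
      HasDerivAt (fun s => gridMid (w2 s) j)
        ((β * gridDx h (u2 t) j - γ * β * gridDx h (u1 t) j) / μ) t)
    (hbc0 : ∀ t ≥ (0 : ℝ), w1 t 0 = 0 ∧ w2 t 0 = 0)
    (hbcL1 : ∀ t ≥ (0 : ℝ),
      α * u1 t (N + 1) - γ * β * u2 t (N + 1) = -(k₁ * w1 t (N + 1)))
    (hbcL2 : ∀ t ≥ (0 : ℝ),
      β * u2 t (N + 1) - γ * β * u1 t (N + 1) = -(k₂ * w2 t (N + 1))) :
    ∀ t ≥ (0 : ℝ),
      HasDerivAt (fun s => discEnergy ρ μ β γ α₁ h N (u1 s) (u2 s) (w1 s) (w2 s))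
        (-(k₁ * (w1 t (N + 1)) ^ 2) - k₂ * (w2 t (N + 1)) ^ 2) t
      ∧ -(k₁ * (w1 t (N + 1)) ^ 2) - k₂ * (w2 t (N + 1)) ^ 2 ≤ 0 := by

  intro t ht
  have hhpos : 0 < h := by
    rw [hh]; positivity
  have hhne : h ≠ 0 := ne_of_gt hhpos
  have hρne : ρ ≠ 0 := ne_of_gt hρ
  have hμne : μ ≠ 0 := ne_of_gt hμ
  -- boundary anti-derivative
  set G : ℕ → ℝ := fun j =>
    w1 t j * (α * u1 t j - γ * β * u2 t j) + w2 t j * (β * u2 t j - γ * β * u1 t j)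
    with hG
  -- derivative of each summand
  have hsum : ∀ j ∈ Finset.range (N + 1),
      HasDerivAt (fun s => ρ * gridMid (w1 s) j ^ 2 + μ * gridMid (w2 s) j ^ 2
          + β * (γ * gridMid (u1 s) j - gridMid (u2 s) j) ^ 2 + α₁ * gridMid (u1 s) j ^ 2)
        (ρ * (2 * gridMid (w1 t) j ^ 1 *
            ((α * gridDx h (u1 t) j - γ * β * gridDx h (u2 t) j) / ρ))
          + μ * (2 * gridMid (w2 t) j ^ 1 *
            ((β * gridDx h (u2 t) j - γ * β * gridDx h (u1 t) j) / μ))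
          + β * (2 * (γ * gridMid (u1 t) j - gridMid (u2 t) j) ^ 1 *
            (γ * gridDx h (w1 t) j - gridDx h (w2 t) j))
          + α₁ * (2 * gridMid (u1 t) j ^ 1 * gridDx h (w1 t) j)) t := by
    intro j hj
    have hjN : j ≤ N := Nat.lt_succ_iff.mp (Finset.mem_range.mp hj)
    have h1 := hode1 t ht j hjN
    have h2 := hode2 t ht j hjN
    have h3 := hode3 t ht j hjN
    have h4 := hode4 t ht j hjN
    exact ((((h3.pow 2).const_mul ρ).add ((h4.pow 2).const_mul μ)).add
        ((((h1.const_mul γ).sub h2).pow 2).const_mul β)).add ((h1.pow 2).const_mul α₁)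
  have hE : HasDerivAt
      (fun s => discEnergy ρ μ β γ α₁ h N (u1 s) (u2 s) (w1 s) (w2 s))
      (h / 2 * ∑ j ∈ Finset.range (N + 1),
        (ρ * (2 * gridMid (w1 t) j ^ 1 *
            ((α * gridDx h (u1 t) j - γ * β * gridDx h (u2 t) j) / ρ))
          + μ * (2 * gridMid (w2 t) j ^ 1 *
            ((β * gridDx h (u2 t) j - γ * β * gridDx h (u1 t) j) / μ))
          + β * (2 * (γ * gridMid (u1 t) j - gridMid (u2 t) j) ^ 1 *
            (γ * gridDx h (w1 t) j - gridDx h (w2 t) j))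
          + α₁ * (2 * gridMid (u1 t) j ^ 1 * gridDx h (w1 t) j))) t := by
    unfold discEnergy
    exact (HasDerivAt.fun_sum hsum).const_mul (h / 2)
  have key : h / 2 * ∑ j ∈ Finset.range (N + 1),
        (ρ * (2 * gridMid (w1 t) j ^ 1 *
            ((α * gridDx h (u1 t) j - γ * β * gridDx h (u2 t) j) / ρ))
          + μ * (2 * gridMid (w2 t) j ^ 1 *
            ((β * gridDx h (u2 t) j - γ * β * gridDx h (u1 t) j) / μ))
          + β * (2 * (γ * gridMid (u1 t) j - gridMid (u2 t) j) ^ 1 *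
            (γ * gridDx h (w1 t) j - gridDx h (w2 t) j))
          + α₁ * (2 * gridMid (u1 t) j ^ 1 * gridDx h (w1 t) j))
      = -(k₁ * (w1 t (N + 1)) ^ 2) - k₂ * (w2 t (N + 1)) ^ 2 := by
    have tele : h / 2 * ∑ j ∈ Finset.range (N + 1),
        (ρ * (2 * gridMid (w1 t) j ^ 1 *
            ((α * gridDx h (u1 t) j - γ * β * gridDx h (u2 t) j) / ρ))
          + μ * (2 * gridMid (w2 t) j ^ 1 *
            ((β * gridDx h (u2 t) j - γ * β * gridDx h (u1 t) j) / μ))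
          + β * (2 * (γ * gridMid (u1 t) j - gridMid (u2 t) j) ^ 1 *
            (γ * gridDx h (w1 t) j - gridDx h (w2 t) j))
          + α₁ * (2 * gridMid (u1 t) j ^ 1 * gridDx h (w1 t) j))
        = ∑ j ∈ Finset.range (N + 1), (G (j + 1) - G j) := by
      rw [Finset.mul_sum]
      refine Finset.sum_congr rfl fun j _ => ?_
      simp only [hG, gridMid, gridDx, pow_one]
      subst hα₁def
      field_simp
      ring
    rw [tele, Finset.sum_range_sub G]
    have hb0 := hbc0 t ht
    have hb1 := hbcL1 t ht
    have hb2 := hbcL2 t ht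
    simp only [hG, hb0.1, hb0.2, hb1, hb2]
    ring
  rw [key] at hE
  refine ⟨hE, ?_⟩
  have : 0 ≤ k₁ * (w1 t (N + 1)) ^ 2 + k₂ * (w2 t (N + 1)) ^ 2 := by positivity
  linarith


end
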